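/- Let λ, μ, μ₀ > 0 with μ·μ₀ > λ·(λ+μ₀). Then there exist positive reals a, b with a·b > 1 such that λ + μ₀ − μ/b > 0 and λ + μ − λ(b + ab) − μ₀/a > 0. -/
import Mathlib


theorem stmt_6 (lam mu mu0 : ℝ) (hlam : 0 < lam) (hmu : 0 < mu) (hmu0 : 0 < mu0)
    (h : mu * mu0 > lam * (lam + mu0)) :
    ∃ a b : ℝ, 0 < a ∧ 0 < b ∧ 1 < a * b ∧
      0 < lam + mu0 - mu / b ∧
      0 < lam + mu - lam * (b + a * b) - mu0 / a := by
  have hlm0 : 0 < lam + mu0 := by linarith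
  have hA : 0 < lam * (lam + mu0) := mul_pos hlam hlm0
  set c : ℝ := (lam * (lam + mu0) + mu * mu0) / (2 * (lam * (lam + mu0))) with hc_def
  have hc0 : 0 < c := by positivity
  have hc1 : 1 < c := by
    rw [hc_def, lt_div_iff₀ (by positivity)]
    linarith
  have hAc : lam * (lam + mu0) * c < mu * mu0 := by
    rw [hc_def, ← mul_div_assoc, div_lt_iff₀ (by positivity)]
    nlinarith
  -- key inequality: mu*(lam*c+mu0) < (lam+mu0)*(c*(lam+mu-lam*c))
  have hkey : mu * (lam * c + mu0) < (lam + mu0) * (c * (lam + mu - lam * c)) := by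
    have hid : (lam + mu0) * (c * (lam + mu - lam * c)) - mu * (lam * c + mu0)
        = (c - 1) * (mu * mu0 - lam * (lam + mu0) * c) := by ring
    nlinarith [mul_pos (sub_pos.mpr hc1) (sub_pos.mpr hAc)]
  have hden : 0 < lam * c + mu0 := by positivity
  have hX : 0 < lam + mu - lam * c := by
    nlinarith [mul_pos hmu hden, mul_pos hlm0 hc0]
  set B : ℝ := c * (lam + mu - lam * c) / (lam * c + mu0) with hB_def
  have hBgt : mu / (lam + mu0) < B := by
    rw [hB_def, div_lt_div_iff₀ hlm0 hden]
    nlinarith [hkey]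
  set b : ℝ := (mu / (lam + mu0) + B) / 2 with hb_def
  have hb_pos : 0 < b := by
    have : 0 < mu / (lam + mu0) := by positivity
    rw [hb_def]; linarith
  have hb_gt : mu / (lam + mu0) < b := by rw [hb_def]; linarith
  have hb_lt : b < B := by rw [hb_def]; linarith
  have hbB : b * (lam * c + mu0) < c * (lam + mu - lam * c) := by
    rw [← lt_div_iff₀ hden]; exact hb_lt
  refine ⟨c / b, b, by positivity, hb_pos, ?_, ?_, ?_⟩
  · rw [div_mul_cancel₀ _ (ne_of_gt hb_pos)]; exact hc1
  · have : mu / b < lam + mu0 := by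
      rw [div_lt_iff₀ hb_pos]
      have := (div_lt_iff₀ hlm0).mp hb_gt
      linarith [this]
    linarith
  · rw [div_mul_cancel₀ _ (ne_of_gt hb_pos)]
    have h1 : mu0 / (c / b) = mu0 * b / c := by
      field_simp
    rw [h1, sub_pos] at *
    rw [div_lt_iff₀ hc0]
    nlinarith [hbB]
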